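/- Assume homoskedasticity with σ²_ν > 0. The ordinary least squares estimator uses the matrix G = M, which satisfies MW = 0, MZ̃ = Z̃, and tr(M) = n − L; hence E[xᵀMx] = ‖ℓ̃‖² + (n − L)·σ²_ν and the exact ratio-of-expectations bias of ordinary least squares is E[yᵀMx]/E[xᵀMx] − β = (n − L)·σ_{εν}/(‖ℓ̃‖² + (n − L)·σ²_ν). -/

import Mathlib

open MeasureTheory Matrix BigOperators

lemma stmt7_l2mul {Ω : Type*} [MeasurableSpace Ω] {μ : Measure Ω} [IsProbabilityMeasure μ]
    {f g : Ω → ℝ} (hf : MemLp f 2 μ) (hg : MemLp g 2 μ) :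
    Integrable (fun ω => f ω * g ω) μ := by
  rw [← memLp_one_iff_integrable]
  have h := hg.smul (φ := f) hf (r := 1)
    (hpqr := ENNReal.holderConjugate_iff.mpr ENNReal.inv_two_add_inv_two)
  exact h

lemma stmt7_dot_expand {n : ℕ} (M : Matrix (Fin n) (Fin n) ℝ) (u v : Fin n → ℝ) :
    u ⬝ᵥ (M *ᵥ v) = ∑ i, ∑ j, M i j * (u i * v j) := by
  simp only [dotProduct, mulVec, Finset.mul_sum]
  exact Finset.sum_congr rfl fun i _ => Finset.sum_congr rfl fun j _ => by ring

lemma stmt7_isUnit {n L : ℕ} (W : Matrix (Fin n) (Fin L) ℝ) (hWrank : W.rank = L) :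
    IsUnit (Wᵀ * W) := by
  rw [← Matrix.mulVec_surjective_iff_isUnit]
  have hr : (Wᵀ * W).rank = L := by rw [Matrix.rank_transpose_mul_self, hWrank]
  have htop : LinearMap.range (Wᵀ * W).mulVecLin = ⊤ :=
    Submodule.eq_top_of_finrank_eq (by rw [← Matrix.rank, hr, Module.finrank_fin_fun])
  intro v
  have := LinearMap.range_eq_top.mp htop v
  simpa only [Matrix.mulVecLin_apply] using this

lemma stmt7_M {n L : ℕ} (W : Matrix (Fin n) (Fin L) ℝ) (hWrank : W.rank = L)
    (M : Matrix (Fin n) (Fin n) ℝ) (hM : M = 1 - W * (Wᵀ * W)⁻¹ * Wᵀ) :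
    M * W = 0 ∧ M.trace = (n : ℝ) - L := by
  have hu := stmt7_isUnit W hWrank
  have h1 : (Wᵀ * W)⁻¹ * (Wᵀ * W) = 1 :=
    Matrix.nonsing_inv_mul _ ((Matrix.isUnit_iff_isUnit_det _).mp hu)
  constructor
  · rw [hM]
    rw [Matrix.sub_mul, Matrix.one_mul]
    rw [Matrix.mul_assoc (W * (Wᵀ * W)⁻¹), Matrix.mul_assoc, h1, Matrix.mul_one]
    simp
  · rw [hM, Matrix.trace_sub, Matrix.trace_one]
    have : (W * (Wᵀ * W)⁻¹ * Wᵀ).trace = ((Wᵀ * W)⁻¹ * (Wᵀ * W)).trace := by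
      rw [Matrix.mul_assoc, Matrix.trace_mul_comm, ← Matrix.mul_assoc]
    rw [this, h1, Matrix.trace_one]
    simp

/-- Under homoskedasticity with `σ²_ν > 0`, the OLS matrix `M` satisfies
`MW = 0`, `MZ̃ = Z̃`, `tr(M) = n − L`, hence `E[xᵀMx] = ‖ℓ̃‖² + (n − L)·σ²_ν` and the
ratio-of-expectations bias of OLS is `(n − L)·σ_{εν}/(‖ℓ̃‖² + (n − L)·σ²_ν)`. -/
theorem stmt7
    {Ω : Type*} [MeasurableSpace Ω] (μ : Measure Ω) [IsProbabilityMeasure μ]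
    (n K L : ℕ) (hn : 1 ≤ n) (hK : 1 ≤ K) (hL : 1 ≤ L) (hLn : L < n)
    (W : Matrix (Fin n) (Fin L) ℝ) (Z : Matrix (Fin n) (Fin K) ℝ)
    (hWrank : W.rank = L) (hZrank : Z.rank = K) (hWZ : Wᵀ * Z = 0)
    (M : Matrix (Fin n) (Fin n) ℝ)
    (hM : M = 1 - W * (Wᵀ * W)⁻¹ * Wᵀ)
    (ε ν : Ω → Fin n → ℝ)
    (hmeas : ∀ i, Measurable (fun ω => (ε ω i, ν ω i)))
    (hindep : ProbabilityTheory.iIndepFun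
      (fun i ω => (ε ω i, ν ω i)) μ)
    (hεL2 : ∀ i, MemLp (fun ω => ε ω i) 2 μ)
    (hνL2 : ∀ i, MemLp (fun ω => ν ω i) 2 μ)
    (α : Fin L → ℝ) (π : Fin K → ℝ) (δ : Fin L → ℝ) (β : ℝ)
    (hνmean : ∀ i, ∫ ω, ν ω i ∂μ = 0)
    (hεmean : ∀ i, ∫ ω, ε ω i ∂μ = W i ⬝ᵥ α)
    (σνsq σεν : ℝ) (hσν : 0 < σνsq)
    (hhomν : ∀ i, ∫ ω, (ν ω i) ^ 2 ∂μ = σνsq)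
    (hhomεν : ∀ i, ∫ ω, ε ω i * ν ω i ∂μ = σεν)
    (x y : Ω → Fin n → ℝ) (ℓ : Fin n → ℝ)
    (hx : ∀ ω, x ω = Z *ᵥ π + W *ᵥ δ + ν ω)
    (hℓ : ℓ = Z *ᵥ π)
    (hy : ∀ ω, y ω = β • x ω + ε ω) :
    M * W = 0 ∧ M * Z = Z ∧ M.trace = (n : ℝ) - L ∧
    (∫ ω, x ω ⬝ᵥ (M *ᵥ x ω) ∂μ = ℓ ⬝ᵥ ℓ + ((n : ℝ) - L) * σνsq) ∧
    ((∫ ω, y ω ⬝ᵥ (M *ᵥ x ω) ∂μ) / (∫ ω, x ω ⬝ᵥ (M *ᵥ x ω) ∂μ) - β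
      = ((n : ℝ) - L) * σεν / (ℓ ⬝ᵥ ℓ + ((n : ℝ) - L) * σνsq)) := by
  obtain ⟨hMW, hMtr⟩ := stmt7_M W hWrank M hM
  have hMZ : M * Z = Z := by
    rw [hM, Matrix.sub_mul, Matrix.one_mul, Matrix.mul_assoc, hWZ]
    simp [Matrix.mul_assoc]
  -- the fixed part of x
  set c : Fin n → ℝ := Z *ᵥ π + W *ᵥ δ with hc
  have hxc : ∀ ω i, x ω i = c i + ν ω i := by
    intro ω i; rw [hx ω]; rfl
  have hνInt : ∀ i, Integrable (fun ω => ν ω i) μ := fun i => (hνL2 i).integrable one_le_two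
  have hεInt : ∀ i, Integrable (fun ω => ε ω i) μ := fun i => (hεL2 i).integrable one_le_two
  have hxL2 : ∀ i, MemLp (fun ω => x ω i) 2 μ := by
    intro i
    have hfe : (fun ω => x ω i) = fun ω => c i + ν ω i := funext fun ω => hxc ω i
    rw [hfe]; exact (memLp_const (μ := μ) (p := 2) (c i)).add (hνL2 i)
  -- off-diagonal independence consequences
  have hindν : ∀ i j, i ≠ j →
      ProbabilityTheory.IndepFun (fun ω => ν ω i) (fun ω => ν ω j) μ := by
    intro i j hij
    exact (hindep.indepFun hij).comp measurable_snd measurable_snd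
  have hindεν : ∀ i j, i ≠ j →
      ProbabilityTheory.IndepFun (fun ω => ε ω i) (fun ω => ν ω j) μ := by
    intro i j hij
    exact (hindep.indepFun hij).comp measurable_fst measurable_snd
  have hEνν : ∀ i j, ∫ ω, ν ω i * ν ω j ∂μ = if i = j then σνsq else 0 := by
    intro i j
    by_cases h : i = j
    · subst h; rw [if_pos rfl, ← hhomν i]
      exact integral_congr_ae (Filter.Eventually.of_forall fun ω => by
        show ν ω i * ν ω i = ν ω i ^ 2; ring)
    · rw [if_neg h]
      have h2 := (hindν i j h).integral_mul_eq_mul_integral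
        (hνL2 i).aestronglyMeasurable (hνL2 j).aestronglyMeasurable
      have h3 : ∫ ω, ν ω i * ν ω j ∂μ
          = (∫ ω, ν ω i ∂μ) * ∫ ω, ν ω j ∂μ := h2
      rw [h3, hνmean i, hνmean j, mul_zero]
  have hEεν : ∀ i j, ∫ ω, ε ω i * ν ω j ∂μ = if i = j then σεν else 0 := by
    intro i j
    by_cases h : i = j
    · subst h; rw [if_pos rfl]; exact hhomεν i
    · rw [if_neg h]
      have h3 : ∫ ω, ε ω i * ν ω j ∂μ
          = (∫ ω, ε ω i ∂μ) * ∫ ω, ν ω j ∂μ := (hindεν i j h).integral_mul_eq_mul_integral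
        (hεL2 i).aestronglyMeasurable (hνL2 j).aestronglyMeasurable
      rw [h3, hνmean j, mul_zero]
  -- expectations of products
  have hExx : ∀ i j, ∫ ω, x ω i * x ω j ∂μ
      = c i * c j + (if i = j then σνsq else 0) := by
    intro i j
    have i2 : Integrable (fun ω => c i * ν ω j) μ := (hνInt j).const_mul _
    have i3 : Integrable (fun ω => ν ω i * c j) μ := (hνInt i).mul_const _
    have i4 : Integrable (fun ω => ν ω i * ν ω j) μ := stmt7_l2mul (hνL2 i) (hνL2 j)
    have i34 : Integrable (fun ω => ν ω i * c j + ν ω i * ν ω j) μ := by exact i3.add i4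
    have i234 : Integrable (fun ω => c i * ν ω j + (ν ω i * c j + ν ω i * ν ω j)) μ := by
      exact i2.add i34
    have h1 : ∫ ω, x ω i * x ω j ∂μ
        = ∫ ω, (c i * c j + (c i * ν ω j + (ν ω i * c j + ν ω i * ν ω j))) ∂μ :=
      integral_congr_ae (Filter.Eventually.of_forall fun ω => by
        simp only [hxc]; ring)
    rw [h1, integral_add (integrable_const _) i234,
        integral_add i2 i34, integral_add i3 i4,
        integral_const_mul (c i) (fun ω => ν ω j), integral_mul_const (c j) (fun ω => ν ω i),
        hνmean i, hνmean j, hEνν i j]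
    simp
  have hEεx : ∀ i j, ∫ ω, ε ω i * x ω j ∂μ
      = (W *ᵥ α) i * c j + (if i = j then σεν else 0) := by
    intro i j
    have i3 : Integrable (fun ω => ε ω i * c j) μ := (hεInt i).mul_const _
    have i4 : Integrable (fun ω => ε ω i * ν ω j) μ := stmt7_l2mul (hεL2 i) (hνL2 j)
    have h1 : ∫ ω, ε ω i * x ω j ∂μ
        = ∫ ω, (ε ω i * c j + ε ω i * ν ω j) ∂μ :=
      integral_congr_ae (Filter.Eventually.of_forall fun ω => by
        simp only [hxc]; ring)
    rw [h1, integral_add i3 i4, integral_mul_const, hεmean i, hEεν i j]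
    rfl
  -- orthogonality facts
  have horth : ∀ (u : Fin L → ℝ) (v : Fin K → ℝ), (W *ᵥ u) ⬝ᵥ (Z *ᵥ v) = 0 := by
    intro u v
    rw [Matrix.dotProduct_mulVec, ← Matrix.vecMul_transpose, Matrix.vecMul_vecMul, hWZ,
        Matrix.vecMul_zero, zero_dotProduct]
  have hMc : M *ᵥ c = ℓ := by
    rw [hc, Matrix.mulVec_add, Matrix.mulVec_mulVec, Matrix.mulVec_mulVec, hMZ, hMW, hℓ]
    simp
  have hcl : c ⬝ᵥ ℓ = ℓ ⬝ᵥ ℓ := by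
    rw [hc, add_dotProduct, hℓ, horth δ π, add_zero]
  have htr : ∑ i, M i i = (n : ℝ) - L := by
    simpa [Matrix.trace, Matrix.diag] using hMtr
  -- the key double sums
  have hsum : ∀ (u : Fin n → ℝ) (s : ℝ),
      (∑ i, ∑ j, M i j * (u i * c j + if i = j then s else 0))
        = u ⬝ᵥ (M *ᵥ c) + ((n : ℝ) - L) * s := by
    intro u s
    have : ∀ i, ∑ j, M i j * (u i * c j + if i = j then s else 0)
        = (∑ j, M i j * (u i * c j)) + M i i * s := by
      intro i
      have h4 : ∀ j, M i j * (u i * c j + if i = j then s else 0)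
          = M i j * (u i * c j) + (if i = j then M i j * s else 0) := by
        intro j; by_cases h : i = j <;> simp [h, mul_add]
      rw [Finset.sum_congr rfl fun j _ => h4 j, Finset.sum_add_distrib]
      simp
    simp_rw [this]
    rw [Finset.sum_add_distrib, ← Finset.sum_mul, htr, stmt7_dot_expand]
  -- the main integrals
  have hIprod : ∀ i j, Integrable (fun ω => M i j * (x ω i * x ω j)) μ :=
    fun i j => (stmt7_l2mul (hxL2 i) (hxL2 j)).const_mul _
  have hIprodε : ∀ i j, Integrable (fun ω => M i j * (ε ω i * x ω j)) μ :=
    fun i j => (stmt7_l2mul (hεL2 i) (hxL2 j)).const_mul _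
  have hxMx : ∫ ω, x ω ⬝ᵥ (M *ᵥ x ω) ∂μ = ℓ ⬝ᵥ ℓ + ((n : ℝ) - L) * σνsq := by
    have h1 : ∫ ω, x ω ⬝ᵥ (M *ᵥ x ω) ∂μ
        = ∫ ω, ∑ i, ∑ j, M i j * (x ω i * x ω j) ∂μ :=
      integral_congr_ae (Filter.Eventually.of_forall fun ω => stmt7_dot_expand M _ _)
    rw [h1, integral_finset_sum _ (fun i _ => integrable_finset_sum _ fun j _ => hIprod i j)]
    have h2 : ∀ i, ∫ ω, ∑ j, M i j * (x ω i * x ω j) ∂μ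
        = ∑ j, M i j * (c i * c j + if i = j then σνsq else 0) := by
      intro i
      rw [integral_finset_sum _ fun j _ => hIprod i j]
      exact Finset.sum_congr rfl fun j _ => by rw [integral_const_mul, hExx i j]
    rw [Finset.sum_congr rfl fun i _ => h2 i]
    have := hsum c σνsq
    rw [this, hMc, hcl]
  have hεMx : ∫ ω, ε ω ⬝ᵥ (M *ᵥ x ω) ∂μ = ((n : ℝ) - L) * σεν := by
    have h1 : ∫ ω, ε ω ⬝ᵥ (M *ᵥ x ω) ∂μ
        = ∫ ω, ∑ i, ∑ j, M i j * (ε ω i * x ω j) ∂μ :=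
      integral_congr_ae (Filter.Eventually.of_forall fun ω => stmt7_dot_expand M _ _)
    rw [h1, integral_finset_sum _ (fun i _ => integrable_finset_sum _ fun j _ => hIprodε i j)]
    have h2 : ∀ i, ∫ ω, ∑ j, M i j * (ε ω i * x ω j) ∂μ
        = ∑ j, M i j * ((W *ᵥ α) i * c j + if i = j then σεν else 0) := by
      intro i
      rw [integral_finset_sum _ fun j _ => hIprodε i j]
      exact Finset.sum_congr rfl fun j _ => by rw [integral_const_mul, hEεx i j]
    rw [Finset.sum_congr rfl fun i _ => h2 i, hsum (W *ᵥ α) σεν, hMc, hℓ, horth α π, zero_add]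
  have hIxMx : Integrable (fun ω => x ω ⬝ᵥ (M *ᵥ x ω)) μ := by
    have hfe : (fun ω => x ω ⬝ᵥ (M *ᵥ x ω))
        = fun ω => ∑ i, ∑ j, M i j * (x ω i * x ω j) :=
      funext fun ω => stmt7_dot_expand M _ _
    rw [hfe]
    exact integrable_finset_sum _ fun i _ => integrable_finset_sum _ fun j _ => hIprod i j
  have hIεMx : Integrable (fun ω => ε ω ⬝ᵥ (M *ᵥ x ω)) μ := by
    have hfe : (fun ω => ε ω ⬝ᵥ (M *ᵥ x ω))
        = fun ω => ∑ i, ∑ j, M i j * (ε ω i * x ω j) :=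
      funext fun ω => stmt7_dot_expand M _ _
    rw [hfe]
    exact integrable_finset_sum _ fun i _ => integrable_finset_sum _ fun j _ => hIprodε i j
  have hyMx : ∫ ω, y ω ⬝ᵥ (M *ᵥ x ω) ∂μ
      = β * (ℓ ⬝ᵥ ℓ + ((n : ℝ) - L) * σνsq) + ((n : ℝ) - L) * σεν := by
    have h1 : ∫ ω, y ω ⬝ᵥ (M *ᵥ x ω) ∂μ
        = ∫ ω, (β * (x ω ⬝ᵥ (M *ᵥ x ω)) + ε ω ⬝ᵥ (M *ᵥ x ω)) ∂μ :=
      integral_congr_ae (Filter.Eventually.of_forall fun ω => by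
        simp only [hy, add_dotProduct, smul_dotProduct, smul_eq_mul])
    have hIb : Integrable (fun ω => β * (x ω ⬝ᵥ (M *ᵥ x ω))) μ := hIxMx.const_mul _
    rw [h1, integral_add hIb hIεMx, integral_const_mul, hxMx, hεMx]
  -- positivity of the denominator
  have hll : 0 ≤ ℓ ⬝ᵥ ℓ := Finset.sum_nonneg fun i _ => mul_self_nonneg _
  have hnL : (0 : ℝ) < (n : ℝ) - L := by
    have : (L : ℝ) < n := by exact_mod_cast hLn
    linarith
  have hA : 0 < ℓ ⬝ᵥ ℓ + ((n : ℝ) - L) * σνsq := by positivity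
  refine ⟨hMW, hMZ, hMtr, hxMx, ?_⟩
  rw [hxMx, hyMx]
  field_simp
  ring
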